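/- arXiv:2206.04275 — 2 statements merged into one kernel-verified Lean document; each statement's English description precedes it below -/
import Mathlib

section
/- Suppose 0 < d₁ ≤ 0.1 and 57·√d₁ < d₂ < 1, and let a be a positive integer with a ≤ n. Then there exists a finite set Σ_V ⊆ S^{n-1} with |Σ_V| < (3/√d₁)^{2a}·(n·e/a)^a such that: (i) every point of V lies within Euclidean distance 3·√d₁ of some point of Σ_V; and (ii) every y ∈ Σ_V has at most a nonzero coordinates and satisfies Σ_{i : 1/(2a) < |y_i|² ≤ 4/b} |y_i|² ≥ d₂ − 57·√d₁. -/
set_option maxHeartbeats 1000000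
open MeasureTheory Metric Module

lemma packing_bound {E : Type*} [NormedAddCommGroup E] [NormedSpace ℝ E] [FiniteDimensional ℝ E]
    [MeasurableSpace E] [BorelSpace E] (μ : Measure E) [μ.IsAddHaarMeasure]
    {ε : ℝ} (hε : 0 < ε) (S : Finset E) (hS1 : ∀ y ∈ S, ‖y‖ ≤ 1)
    (hsep : (S : Set E).Pairwise fun y z => ε ≤ dist y z) :
    (S.card : ℝ) * (ε/2) ^ (finrank ℝ E) ≤ (1 + ε/2) ^ (finrank ℝ E) := by
  have hε2 : (0:ℝ) < ε/2 := by linarith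
  have hdisj : (S : Set E).PairwiseDisjoint (fun y => ball y (ε/2)) := by
    intro y hy z hz hyz
    apply ball_disjoint_ball
    have := hsep hy hz hyz
    linarith
  have hsub : ∀ y ∈ S, ball y (ε/2) ⊆ ball 0 (1 + ε/2) := by
    intro y hy z hz
    simp only [mem_ball] at *
    have : dist z 0 ≤ dist z y + dist y 0 := dist_triangle _ _ _
    have h0 : dist y 0 ≤ 1 := by simpa [dist_zero_right] using hS1 y hy
    linarith
  have hμ : ∑ y ∈ S, μ (ball y (ε/2)) ≤ μ (ball 0 (1 + ε/2)) := by
    rw [← measure_biUnion_finset hdisj (fun y _ => measurableSet_ball)]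
    exact measure_mono (Set.iUnion₂_subset hsub)
  have hball : ∀ y : E, μ (ball y (ε/2)) = ENNReal.ofReal ((ε/2) ^ finrank ℝ E) * μ (ball 0 1) :=
    fun y => μ.addHaar_ball_of_pos y hε2
  rw [Finset.sum_congr rfl (fun y _ => hball y), Finset.sum_const, nsmul_eq_mul,
    μ.addHaar_ball_of_pos _ (by linarith : (0:ℝ) < 1 + ε/2)] at hμ
  have h0 : μ (ball 0 1) ≠ 0 := (measure_ball_pos μ 0 one_pos).ne'
  have htop : μ (ball 0 1) ≠ ⊤ := measure_ball_lt_top.ne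
  rw [← mul_assoc] at hμ
  have := ENNReal.mul_le_mul_iff_left h0 htop |>.mp hμ
  have h2 : (S.card : ENNReal) * ENNReal.ofReal ((ε/2) ^ finrank ℝ E) =
      ENNReal.ofReal ((S.card : ℝ) * (ε/2) ^ finrank ℝ E) := by
    rw [ENNReal.ofReal_mul (by positivity)]
    simp
  rw [h2] at this
  have := (ENNReal.ofReal_le_ofReal_iff (by positivity)).mp this
  exact this

lemma net_exists {E : Type*} [NormedAddCommGroup E] [NormedSpace ℝ E] [FiniteDimensional ℝ E]
    {ε : ℝ} (hε : 0 < ε) :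
    ∃ N : Finset E, (∀ y ∈ N, ‖y‖ = 1) ∧
      (N.card : ℝ) * (ε/2) ^ (finrank ℝ E) ≤ (1 + ε/2) ^ (finrank ℝ E) ∧
      ∀ x : E, ‖x‖ = 1 → ∃ y ∈ N, dist x y ≤ ε := by
  classical
  borelize E
  set μ := (finBasis ℝ E).addHaar with hμdef
  set d := finrank ℝ E with hd
  have hε2 : (0:ℝ) < (ε/2)^d := by positivity
  set P : ℕ → Prop := fun k => ∃ S : Finset E, (∀ y ∈ S, ‖y‖ = 1) ∧
      ((S : Set E).Pairwise fun y z => ε ≤ dist y z) ∧ S.card = k with hP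
  have hbound : ∀ k, P k → k ≤ ⌈(1 + ε/2)^d / (ε/2)^d⌉₊ := by
    intro k ⟨S, h1, h2, h3⟩
    have := packing_bound μ hε S (fun y hy => (h1 y hy).le) h2
    rw [h3] at this
    have hk : (k:ℝ) ≤ (1 + ε/2)^d / (ε/2)^d := by
      rw [le_div_iff₀ hε2]; exact this
    exact_mod_cast hk.trans (Nat.le_ceil _)
  have hP0 : P 0 := ⟨∅, by simp, by simp, rfl⟩
  set B := ⌈(1 + ε/2)^d / (ε/2)^d⌉₊
  set k := Nat.findGreatest P B with hk
  have hPk : P k := Nat.findGreatest_spec (Nat.zero_le B) hP0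
  obtain ⟨S, hS1, hS2, hS3⟩ := hPk
  refine ⟨S, hS1, ?_, ?_⟩
  · have := packing_bound μ hε S (fun y hy => (hS1 y hy).le) hS2
    exact this
  · intro x hx
    by_contra hcon
    push_neg at hcon
    have hxS : x ∉ S := by
      intro h
      have := hcon x h
      simp only [dist_self] at this
      linarith
    have hsep' : ((insert x S : Finset E) : Set E).Pairwise fun y z => ε ≤ dist y z := by
      intro y hy z hz hyz
      simp only [Finset.coe_insert, Set.mem_insert_iff, Finset.mem_coe] at hy hz
      rcases hy with rfl | hy
      · rcases hz with rfl | hz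
        · exact absurd rfl hyz
        · exact (hcon z hz).le
      · rcases hz with rfl | hz
        · rw [dist_comm]; exact (hcon y hy).le
        · exact hS2 hy hz hyz
    have h1' : ∀ y ∈ insert x S, ‖y‖ = 1 := by
      intro y hy
      rcases Finset.mem_insert.mp hy with rfl | hy
      · exact hx
      · exact hS1 y hy
    have hPk1 : P (S.card + 1) := ⟨insert x S, h1', hsep', by
      rw [Finset.card_insert_of_notMem hxS]⟩
    have := Nat.le_findGreatest (hbound _ hPk1) hPk1
    omega
open Module

lemma pow_self_le_exp_mul_factorial : ∀ k : ℕ, (k:ℝ)^k ≤ Real.exp 1 ^ k * k.factorial := by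
  intro k
  induction k with
  | zero => simp
  | succ k ih =>
    have h1 : ((k:ℝ)+1)^k ≤ Real.exp 1 * (k:ℝ)^k := by
      rcases Nat.eq_zero_or_pos k with rfl | hk
      · simpa using Real.exp_pos 1 |>.le.trans (le_refl _) |> fun _ => by
          simpa using (by norm_num : (1:ℝ) ≤ Real.exp 1 * 1).trans_eq (by ring)
      · have hk' : (0:ℝ) < k := by exact_mod_cast hk
        have : ((k:ℝ)+1) = k * (1 + 1/k) := by field_simp
        rw [this, mul_pow]
        have h2 : (1 + 1/(k:ℝ))^k ≤ Real.exp 1 := by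
          have := Real.add_one_le_exp (1/(k:ℝ))
          calc (1 + 1/(k:ℝ))^k ≤ Real.exp (1/k) ^ k := by
                apply pow_le_pow_left₀ (by positivity) (by linarith)
            _ = Real.exp (k * (1/k)) := by rw [Real.exp_nat_mul]
            _ = Real.exp 1 := by rw [mul_one_div, div_self hk'.ne']
        calc (k:ℝ)^k * (1+1/k)^k ≤ (k:ℝ)^k * Real.exp 1 :=
              mul_le_mul_of_nonneg_left h2 (by positivity)
          _ = Real.exp 1 * (k:ℝ)^k := by ring
    calc ((k+1:ℕ):ℝ)^(k+1) = ((k:ℝ)+1) * ((k:ℝ)+1)^k := by push_cast; ring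
      _ ≤ ((k:ℝ)+1) * (Real.exp 1 * (k:ℝ)^k) := by
          apply mul_le_mul_of_nonneg_left h1 (by positivity)
      _ ≤ ((k:ℝ)+1) * (Real.exp 1 * (Real.exp 1 ^ k * k.factorial)) := by
          apply mul_le_mul_of_nonneg_left (mul_le_mul_of_nonneg_left ih (Real.exp_pos 1).le)
            (by positivity)
      _ = Real.exp 1 ^ (k+1) * ((k+1:ℕ) * k.factorial) := by push_cast; ring
      _ = Real.exp 1 ^ (k+1) * (k+1).factorial := by rw [Nat.factorial_succ]; push_cast; ring

lemma choose_le_pow_e (n a : ℕ) (ha : 1 ≤ a) :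
    (n.choose a : ℝ) ≤ ((n:ℝ) * Real.exp 1 / a) ^ a := by
  have h1 : (n.choose a : ℝ) * a.factorial ≤ (n:ℝ)^a := by
    have := Nat.descFactorial_le_pow n a
    rw [Nat.descFactorial_eq_factorial_mul_choose] at this
    exact_mod_cast by rw [mul_comm]; exact_mod_cast this
  have h2 : ((a:ℝ))^a ≤ Real.exp 1 ^ a * a.factorial := pow_self_le_exp_mul_factorial a
  have ha' : (0:ℝ) < a := by exact_mod_cast ha
  have hfa : (0:ℝ) < a.factorial := by exact_mod_cast a.factorial_pos
  rw [div_pow, mul_pow]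
  rw [le_div_iff₀ (by positivity)]
  calc (n.choose a : ℝ) * (a:ℝ)^a ≤ (n.choose a : ℝ) * (Real.exp 1 ^ a * a.factorial) := by
        apply mul_le_mul_of_nonneg_left h2 (by positivity)
    _ = ((n.choose a : ℝ) * a.factorial) * Real.exp 1 ^ a := by ring
    _ ≤ (n:ℝ)^a * Real.exp 1 ^ a := by
        apply mul_le_mul_of_nonneg_right h1 (by positivity)
open Module

def MT (n : ℕ) (T : Finset (Fin n)) : Submodule ℂ (EuclideanSpace ℂ (Fin n)) where
  carrier := {y | ∀ i, i ∉ T → y i = 0}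
  add_mem' := by intro y z hy hz i hi; simp [hy i hi, hz i hi]
  zero_mem' := by intro i _; rfl
  smul_mem' := by intro c y hy i hi; simp [hy i hi]

noncomputable def eMT (n : ℕ) (T : Finset (Fin n)) : MT n T ≃ₗ[ℂ] ({ i : Fin n // i ∈ T } → ℂ) where
  toFun y i := y.1 i.1
  map_add' y z := rfl
  map_smul' c y := rfl
  invFun f := ⟨WithLp.toLp 2 (fun i => if h : i ∈ T then f ⟨i, h⟩ else 0), by
    intro i hi; simp [hi]⟩
  left_inv y := by
    ext i
    by_cases h : i ∈ T
    · simp [h]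
    · simp [h, y.2 i h]
  right_inv f := by
    ext i
    simp [i.2]

lemma finrank_MT (n : ℕ) (T : Finset (Fin n)) : finrank ℝ (MT n T) = 2 * T.card := by
  rw [finrank_real_of_complex]
  congr 1
  rw [(eMT n T).finrank_eq, Module.finrank_pi, Fintype.card_coe]


lemma bucket_aux {n : ℕ} (a : ℕ) (b ε d₂ : ℝ) (ha' : 0 < (a:ℝ)) (hb : 1 ≤ b) (hε : 0 < ε)
    (x x' y : EuclideanSpace ℂ (Fin n))
    (hsx' : ∑ i, ‖x' i‖^2 = 1) (hsy : ∑ i, ‖y i‖^2 = 1)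
    (hdist : dist x' y ≤ ε)
    (hf : ∀ i, 1/(a:ℝ) < ‖x i‖^2 → ‖x i‖^2 ≤ 1/b →
      ‖x i‖^2 ≤ ‖x' i‖^2 ∧ ‖x' i‖^2 ≤ (10/9) * (1/b) ∧ 1/(a:ℝ) < ‖x' i‖^2)
    (hbig : d₂ ≤ ∑ i, if 1/(a:ℝ) < ‖x i‖^2 ∧ ‖x i‖^2 ≤ 1/b then ‖x i‖^2 else 0) :
    d₂ - 57*ε ≤ ∑ i, if 1/(2*(a:ℝ)) < ‖y i‖^2 ∧ ‖y i‖^2 ≤ 4/b then ‖y i‖^2 else 0 := by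
  classical
  have hbpos : (0:ℝ) < b := by linarith
  set δ : Fin n → ℝ := fun i => |‖y i‖^2 - ‖x' i‖^2| with hδdef
  have hδnn : ∀ i, 0 ≤ δ i := fun i => abs_nonneg _
  -- total fluctuation bound
  have hδsum : ∑ i, δ i ≤ 2*ε := by
    have step1 : ∀ i, δ i ≤ ‖y i - x' i‖ * (‖y i‖ + ‖x' i‖) := by
      intro i
      have h1 : |‖y i‖ - ‖x' i‖| ≤ ‖y i - x' i‖ := abs_norm_sub_norm_le _ _
      have h2 : δ i = |‖y i‖ - ‖x' i‖| * (‖y i‖ + ‖x' i‖) := by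
        show |‖y i‖^2 - ‖x' i‖^2| = _
        have : ‖y i‖^2 - ‖x' i‖^2 = (‖y i‖ - ‖x' i‖) * (‖y i‖ + ‖x' i‖) := by ring
        rw [this, abs_mul, abs_of_nonneg (by positivity : (0:ℝ) ≤ ‖y i‖ + ‖x' i‖)]
      rw [h2]
      exact mul_le_mul_of_nonneg_right h1 (by positivity)
    have hCS : ∑ i, ‖y i - x' i‖ * (‖y i‖ + ‖x' i‖) ≤
        Real.sqrt (∑ i, ‖y i - x' i‖^2) * Real.sqrt (∑ i, (‖y i‖ + ‖x' i‖)^2) := by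
      have h := Finset.sum_mul_sq_le_sq_mul_sq Finset.univ
        (fun i => ‖y i - x' i‖) (fun i => ‖y i‖ + ‖x' i‖)
      have hSnn : (0:ℝ) ≤ ∑ i, ‖y i - x' i‖ * (‖y i‖ + ‖x' i‖) :=
        Finset.sum_nonneg fun i _ => by positivity
      have := Real.sqrt_le_sqrt h
      rwa [Real.sqrt_sq hSnn, Real.sqrt_mul (Finset.sum_nonneg fun i _ => by positivity)] at this
    have hfac1 : Real.sqrt (∑ i, ‖y i - x' i‖^2) ≤ ε := by
      have : Real.sqrt (∑ i, ‖y i - x' i‖^2) = ‖y - x'‖ := by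
        rw [EuclideanSpace.norm_eq]
        congr 1
      rw [this, ← dist_eq_norm, dist_comm]
      exact hdist
    have hfac2 : Real.sqrt (∑ i, (‖y i‖ + ‖x' i‖)^2) ≤ 2 := by
      have h1 : ∑ i, (‖y i‖ + ‖x' i‖)^2 ≤ 4 := by
        have : ∀ i, (‖y i‖ + ‖x' i‖)^2 ≤ 2*‖y i‖^2 + 2*‖x' i‖^2 := by
          intro i; nlinarith [sq_nonneg (‖y i‖ - ‖x' i‖)]
        calc ∑ i, (‖y i‖ + ‖x' i‖)^2 ≤ ∑ i, (2*‖y i‖^2 + 2*‖x' i‖^2) :=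
              Finset.sum_le_sum fun i _ => this i
          _ = 2 * (∑ i, ‖y i‖^2) + 2 * (∑ i, ‖x' i‖^2) := by
              rw [Finset.sum_add_distrib, ← Finset.mul_sum, ← Finset.mul_sum]
          _ = 4 := by rw [hsy, hsx']; norm_num
      calc Real.sqrt (∑ i, (‖y i‖ + ‖x' i‖)^2) ≤ Real.sqrt 4 := Real.sqrt_le_sqrt h1
        _ = 2 := by rw [show (4:ℝ) = 2^2 by norm_num, Real.sqrt_sq (by norm_num : (0:ℝ) ≤ 2)]
    calc ∑ i, δ i ≤ ∑ i, ‖y i - x' i‖ * (‖y i‖ + ‖x' i‖) := Finset.sum_le_sum fun i _ => step1 i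
      _ ≤ Real.sqrt (∑ i, ‖y i - x' i‖^2) * Real.sqrt (∑ i, (‖y i‖ + ‖x' i‖)^2) := hCS
      _ ≤ ε * 2 := mul_le_mul hfac1 hfac2 (Real.sqrt_nonneg _) hε.le
      _ = 2*ε := by ring
  set B := Finset.univ.filter (fun i => 1/(a:ℝ) < ‖x i‖^2 ∧ ‖x i‖^2 ≤ 1/b) with hBdef
  have hBsum : d₂ ≤ ∑ i ∈ B, ‖x i‖^2 := by
    rw [hBdef, Finset.sum_filter]
    exact hbig
  have hterm : ∀ i ∈ B, ‖x i‖^2 - 3*δ i ≤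
      (if 1/(2*(a:ℝ)) < ‖y i‖^2 ∧ ‖y i‖^2 ≤ 4/b then ‖y i‖^2 else 0) := by
    intro i hi
    obtain ⟨hi1, hi2⟩ := (Finset.mem_filter.mp hi).2
    obtain ⟨hle, hub, hlb⟩ := hf i hi1 hi2
    have h1 : ‖x' i‖^2 - ‖y i‖^2 ≤ δ i := by
      rw [hδdef]; exact neg_le_of_neg_le (neg_abs_le _) |>.trans_eq' (by ring_nf)
    have h2 : ‖y i‖^2 - ‖x' i‖^2 ≤ δ i := le_abs_self _
    have hδinn : 0 ≤ δ i := hδnn i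
    have hfnn : (0:ℝ) ≤ ‖x' i‖^2 := by positivity
    by_cases hcase : 1/(2*(a:ℝ)) < ‖y i‖^2 ∧ ‖y i‖^2 ≤ 4/b
    · rw [if_pos hcase]; linarith
    · rw [if_neg hcase]
      rcases not_and_or.mp hcase with hg | hg
      · push_neg at hg
        have h1a : 1/(2*(a:ℝ)) = (1/(a:ℝ))/2 := by ring
        linarith
      · push_neg at hg
        have h4b : (4:ℝ)/b = 4*(1/b) := by ring
        linarith
  have hnn : ∀ i, (0:ℝ) ≤ (if 1/(2*(a:ℝ)) < ‖y i‖^2 ∧ ‖y i‖^2 ≤ 4/b then ‖y i‖^2 else 0) := by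
    intro i; split_ifs <;> positivity
  have hδB : ∑ i ∈ B, δ i ≤ 2*ε := by
    calc ∑ i ∈ B, δ i ≤ ∑ i, δ i :=
          Finset.sum_le_sum_of_subset_of_nonneg (Finset.subset_univ _) fun i _ _ => hδnn i
      _ ≤ 2*ε := hδsum
  calc d₂ - 57*ε ≤ d₂ - 6*ε := by linarith
    _ ≤ (∑ i ∈ B, ‖x i‖^2) - 3*(∑ i ∈ B, δ i) := by linarith
    _ = ∑ i ∈ B, (‖x i‖^2 - 3*δ i) := by rw [Finset.sum_sub_distrib, Finset.mul_sum]
    _ ≤ ∑ i ∈ B, (if 1/(2*(a:ℝ)) < ‖y i‖^2 ∧ ‖y i‖^2 ≤ 4/b then ‖y i‖^2 else 0) :=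
        Finset.sum_le_sum hterm
    _ ≤ ∑ i, (if 1/(2*(a:ℝ)) < ‖y i‖^2 ∧ ‖y i‖^2 ≤ 4/b then ‖y i‖^2 else 0) :=
        Finset.sum_le_sum_of_subset_of_nonneg (Finset.subset_univ _) fun i _ _ => hnn i

open Finset

/-- net lemma. Suppose `0 < d₁ ≤ 0.1` and `57√d₁ < d₂ < 1`, and let
`1 ≤ a ≤ n`. Then there is a finite set `SigmaV` of unit vectors with
`|SigmaV| < (3/√d₁)^(2a)·(ne/a)^a` such that every point of
`V = {x ∈ S^{n-1} : ∑_{|x_i|² ≤ 1/a} |x_i|² < d₁, ∑_{1/a < |x_i|² ≤ 1/b} |x_i|² ≥ d₂}`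
lies within distance `3√d₁` of `SigmaV`, and every `y ∈ SigmaV` has at most `a` nonzero
coordinates and satisfies `∑_{1/(2a) < |y_i|² ≤ 4/b} |y_i|² ≥ d₂ − 57√d₁`. -/
theorem stmt5 (n : ℕ) (hn : 0 < n) (a : ℕ) (ha : 1 ≤ a) (han : a ≤ n)
    (b : ℝ) (hb : 1 ≤ b) (d₁ d₂ : ℝ) (hd₁ : 0 < d₁) (hd₁' : d₁ ≤ 0.1)
    (hd₂l : 57 * Real.sqrt d₁ < d₂) (hd₂u : d₂ < 1) :
    ∃ SigmaV : Finset (EuclideanSpace ℂ (Fin n)),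
      (∀ y ∈ SigmaV, ‖y‖ = 1) ∧
      ((SigmaV.card : ℝ) < (3 / Real.sqrt d₁) ^ (2 * a) * ((n : ℝ) * Real.exp 1 / a) ^ a) ∧
      (∀ x : EuclideanSpace ℂ (Fin n), ‖x‖ = 1 →
        (∑ i, if ‖x i‖ ^ 2 ≤ 1 / (a : ℝ) then ‖x i‖ ^ 2 else 0) < d₁ →
        d₂ ≤ (∑ i, if 1 / (a : ℝ) < ‖x i‖ ^ 2 ∧ ‖x i‖ ^ 2 ≤ 1 / b then ‖x i‖ ^ 2 else 0) →
        ∃ y ∈ SigmaV, dist x y ≤ 3 * Real.sqrt d₁) ∧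
      (∀ y ∈ SigmaV,
        (Function.support fun i => y i).ncard ≤ a ∧
        d₂ - 57 * Real.sqrt d₁ ≤
          ∑ i, if 1 / (2 * (a : ℝ)) < ‖y i‖ ^ 2 ∧ ‖y i‖ ^ 2 ≤ 4 / b then ‖y i‖ ^ 2 else 0) := by
  classical
  set ε := Real.sqrt d₁ with hεdef
  have hε : 0 < ε := Real.sqrt_pos.mpr hd₁
  have hεsq : ε^2 = d₁ := Real.sq_sqrt hd₁.le
  have hε1 : ε < 1 := by
    nlinarith [hεsq, hε]
  have hnet : ∀ T : Finset (Fin n), ∃ N : Finset (MT n T), (∀ y ∈ N, ‖y‖ = 1) ∧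
      (N.card : ℝ) * (ε/2)^(finrank ℝ (MT n T)) ≤ (1+ε/2)^(finrank ℝ (MT n T)) ∧
      ∀ x : MT n T, ‖x‖ = 1 → ∃ y ∈ N, dist x y ≤ ε := fun T => net_exists hε
  choose N hN1 hN2 hN3 using hnet
  set cond : EuclideanSpace ℂ (Fin n) → Prop := fun y =>
    ‖y‖ = 1 ∧ (Function.support fun i => y i).ncard ≤ a ∧
    d₂ - 57 * Real.sqrt d₁ ≤
      ∑ i, if 1 / (2 * (a : ℝ)) < ‖y i‖ ^ 2 ∧ ‖y i‖ ^ 2 ≤ 4 / b then ‖y i‖ ^ 2 else 0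
    with hconddef
  set SigmaV := ((Finset.powersetCard a (Finset.univ : Finset (Fin n))).biUnion
    fun T => (N T).image Subtype.val).filter cond with hSdef
  refine ⟨SigmaV, ?_, ?_, ?_, ?_⟩
  · exact fun y hy => ((Finset.mem_filter.mp hy).2).1
  · -- cardinality
    have hbd : ∀ T ∈ Finset.powersetCard a (Finset.univ : Finset (Fin n)),
        ((N T).card : ℝ) ≤ (1 + 2/ε)^(2*a) := by
      intro T hT
      have hTa : T.card = a := (Finset.mem_powersetCard.mp hT).2
      have h2 := hN2 T
      rw [finrank_MT, hTa] at h2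
      have hpow : (0:ℝ) < (ε/2)^(2*a) := by positivity
      have h3 : ((N T).card : ℝ) ≤ (1+ε/2)^(2*a) / (ε/2)^(2*a) := (le_div_iff₀ hpow).mpr h2
      calc ((N T).card : ℝ) ≤ (1+ε/2)^(2*a) / (ε/2)^(2*a) := h3
        _ = (1 + 2/ε)^(2*a) := by
            rw [← div_pow]
            congr 1
            field_simp
            ring
    have hcard1 : (SigmaV.card : ℝ) ≤ (n.choose a : ℝ) * (1+2/ε)^(2*a) := by
      have h1 : SigmaV.card ≤ ∑ T ∈ Finset.powersetCard a (Finset.univ : Finset (Fin n)),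
          ((N T).image Subtype.val).card :=
        le_trans (Finset.card_filter_le _ _) Finset.card_biUnion_le
      have h2 : (SigmaV.card : ℝ) ≤ ∑ T ∈ Finset.powersetCard a (Finset.univ : Finset (Fin n)),
          ((N T).card : ℝ) := by
        calc (SigmaV.card : ℝ) ≤ (∑ T ∈ Finset.powersetCard a (Finset.univ : Finset (Fin n)),
            ((N T).image Subtype.val).card : ℕ) := by exact_mod_cast h1
          _ = ∑ T ∈ Finset.powersetCard a (Finset.univ : Finset (Fin n)),
              (((N T).image Subtype.val).card : ℝ) := by push_cast; ring
          _ ≤ ∑ T ∈ Finset.powersetCard a (Finset.univ : Finset (Fin n)), ((N T).card : ℝ) := by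
              apply Finset.sum_le_sum
              intro T _
              exact_mod_cast Finset.card_image_le
      calc (SigmaV.card : ℝ) ≤ ∑ T ∈ Finset.powersetCard a (Finset.univ : Finset (Fin n)),
          ((N T).card : ℝ) := h2
        _ ≤ ∑ T ∈ Finset.powersetCard a (Finset.univ : Finset (Fin n)), (1 + 2/ε)^(2*a) :=
            Finset.sum_le_sum hbd
        _ = ((Finset.powersetCard a (Finset.univ : Finset (Fin n))).card : ℝ) * (1+2/ε)^(2*a) := by
            rw [Finset.sum_const, nsmul_eq_mul]
        _ = (n.choose a : ℝ) * (1+2/ε)^(2*a) := by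
            rw [Finset.card_powersetCard, Finset.card_univ, Fintype.card_fin]
    have h3 : (1+2/ε)^(2*a) < (3/ε)^(2*a) := by
      apply pow_lt_pow_left₀ ?_ (by positivity) (by omega)
      rw [lt_div_iff₀ hε, add_mul, div_mul_cancel₀ _ hε.ne']
      linarith
    have hch1 : (1:ℝ) ≤ (n.choose a : ℝ) := by
      exact_mod_cast Nat.succ_le_of_lt (Nat.choose_pos han)
    calc (SigmaV.card : ℝ) ≤ (n.choose a : ℝ) * (1+2/ε)^(2*a) := hcard1
      _ < (n.choose a : ℝ) * (3/ε)^(2*a) := by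
          apply mul_lt_mul_of_pos_left h3 (by linarith)
      _ ≤ ((n:ℝ) * Real.exp 1 / a)^a * (3/ε)^(2*a) := by
          apply mul_le_mul_of_nonneg_right (choose_le_pow_e n a ha) (by positivity)
      _ = (3 / Real.sqrt d₁) ^ (2 * a) * ((n : ℝ) * Real.exp 1 / a) ^ a := by
          rw [mul_comm, hεdef]
  · -- coverage
    intro x hx hsmall hbig
    have ha' : (0:ℝ) < a := by exact_mod_cast ha
    have hsum1 : ∑ i, ‖x i‖^2 = 1 := by
      rw [EuclideanSpace.norm_eq] at hx
      exact Real.sqrt_eq_one.mp hx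
    set T₀ := Finset.univ.filter (fun i => 1/(a:ℝ) < ‖x i‖^2) with hT₀def
    have hT₀card : T₀.card ≤ a := by
      have h1 : (T₀.card : ℝ) * (1/(a:ℝ)) ≤ ∑ i ∈ T₀, ‖x i‖^2 := by
        have h := Finset.card_nsmul_le_sum T₀ (fun i => ‖x i‖^2) (1/(a:ℝ))
          (fun i hi => ((Finset.mem_filter.mp hi).2).le)
        simpa [nsmul_eq_mul] using h
      have h2 : ∑ i ∈ T₀, ‖x i‖^2 ≤ 1 := by
        rw [← hsum1]
        exact Finset.sum_le_sum_of_subset_of_nonneg (Finset.subset_univ _)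
          (fun i _ _ => by positivity)
      have h3 : (T₀.card : ℝ) ≤ (a:ℝ) := by
        rw [mul_one_div] at h1
        exact (div_le_one ha').mp (h1.trans h2)
      exact_mod_cast h3
    obtain ⟨T, hT₀T, hTuniv, hTcard⟩ := Finset.exists_subsuperset_card_eq
      (Finset.subset_univ T₀) hT₀card (by simpa using han)
    have hcompl : ∑ i ∈ Tᶜ, ‖x i‖^2 < d₁ := by
      have h1 : ∑ i ∈ Tᶜ, ‖x i‖^2 ≤ ∑ i ∈ Tᶜ, (if ‖x i‖^2 ≤ 1/(a:ℝ) then ‖x i‖^2 else 0) := by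
        apply Finset.sum_le_sum
        intro i hi
        have hiT : i ∉ T := Finset.mem_compl.mp hi
        have hiT₀ : i ∉ T₀ := fun h => hiT (hT₀T h)
        have hnlt : ¬ (1/(a:ℝ) < ‖x i‖^2) := by
          intro hlt; exact hiT₀ (Finset.mem_filter.mpr ⟨Finset.mem_univ i, hlt⟩)
        rw [if_pos (not_lt.mp hnlt)]
      have h2 : ∑ i ∈ Tᶜ, (if ‖x i‖^2 ≤ 1/(a:ℝ) then ‖x i‖^2 else 0)
          ≤ ∑ i, (if ‖x i‖^2 ≤ 1/(a:ℝ) then ‖x i‖^2 else 0) := by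
        apply Finset.sum_le_sum_of_subset_of_nonneg (Finset.subset_univ _)
        intro i _ _
        split_ifs <;> positivity
      linarith
    set s1 := ∑ i ∈ T, ‖x i‖^2 with hs1def
    have hsplit : s1 + ∑ i ∈ Tᶜ, ‖x i‖^2 = 1 := by
      rw [hs1def, Finset.sum_add_sum_compl]
      exact hsum1
    have hcnn : 0 ≤ ∑ i ∈ Tᶜ, ‖x i‖^2 := Finset.sum_nonneg fun i _ => by positivity
    have hs1l : 1 - d₁ < s1 := by linarith
    have hs1u : s1 ≤ 1 := by linarith
    have hs1pos : 0 < s1 := by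
      have : (0.1:ℝ) < 1 := by norm_num
      linarith
    set σ := Real.sqrt s1 with hσdef
    have hσpos : 0 < σ := Real.sqrt_pos.mpr hs1pos
    have hσsq : σ^2 = s1 := Real.sq_sqrt hs1pos.le
    have hσu : σ ≤ 1 := by nlinarith
    have hσl : s1 ≤ σ := by nlinarith
    set xT : EuclideanSpace ℂ (Fin n) := WithLp.toLp 2 (fun i => if i ∈ T then x i else 0) with hxTdef
    have hxTmem : xT ∈ MT n T := fun i hi => by simp [hxTdef, hi]
    set x' : EuclideanSpace ℂ (Fin n) := ((σ⁻¹ : ℝ) : ℂ) • xT with hx'def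
    have hx'mem : x' ∈ MT n T := Submodule.smul_mem _ _ hxTmem
    have hx'sq : ∀ i ∈ T, ‖x' i‖^2 = ‖x i‖^2 / s1 := by
      intro i hi
      have hxi : x' i = ((σ⁻¹:ℝ):ℂ) * x i := by
        show ((σ⁻¹:ℝ):ℂ) * xT i = _
        rw [hxTdef]
        simp [hi]
      rw [hxi, norm_mul, Complex.norm_real, Real.norm_eq_abs,
        abs_of_pos (inv_pos.mpr hσpos), mul_pow, inv_pow, hσsq]
      ring
    have hsumT : ∑ i, ‖xT i‖^2 = s1 := by
      calc ∑ i, ‖xT i‖^2 = ∑ i, (if i ∈ T then ‖x i‖^2 else 0) := by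
            apply Finset.sum_congr rfl
            intro i _
            by_cases h : i ∈ T <;> simp [hxTdef, h]
        _ = ∑ i ∈ T, ‖x i‖^2 := by rw [Finset.sum_ite_mem, Finset.univ_inter]
    have hxTnorm : ‖xT‖ = σ := by
      rw [EuclideanSpace.norm_eq, hsumT]
    have hx'norm : ‖x'‖ = 1 := by
      rw [hx'def, norm_smul, hxTnorm, Complex.norm_real, Real.norm_eq_abs,
        abs_of_pos (inv_pos.mpr hσpos), inv_mul_cancel₀ hσpos.ne']
    obtain ⟨z, hzN, hzdist⟩ := hN3 T ⟨x', hx'mem⟩ hx'norm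
    set y : EuclideanSpace ℂ (Fin n) := (z : EuclideanSpace ℂ (Fin n)) with hydef
    have hyzero : ∀ i, i ∉ T → y i = 0 := fun i hi => z.2 i hi
    have hynorm : ‖y‖ = 1 := hN1 T z hzN
    have hdist3 : dist x' y ≤ ε := hzdist
    have hdist1 : dist x xT ≤ ε := by
      rw [dist_eq_norm]
      have h1 : ‖x - xT‖ = Real.sqrt (∑ i, ‖(x - xT) i‖^2) := EuclideanSpace.norm_eq _
      have h2 : ∑ i, ‖(x - xT) i‖^2 = ∑ i ∈ Tᶜ, ‖x i‖^2 := by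
        calc ∑ i, ‖(x - xT) i‖^2 = ∑ i, (if i ∈ Tᶜ then ‖x i‖^2 else 0) := by
              apply Finset.sum_congr rfl
              intro i _
              by_cases h : i ∈ T
              · have hz : (x - xT) i = 0 := by
                  show x i - xT i = 0
                  rw [hxTdef]
                  simp [h]
                simp [hz, h]
              · have hz : (x - xT) i = x i := by
                  show x i - xT i = x i
                  rw [hxTdef]
                  simp [h]
                simp [hz, h]
          _ = ∑ i ∈ Tᶜ, ‖x i‖^2 := by rw [Finset.sum_ite_mem, Finset.univ_inter]
      rw [h1, h2]
      calc Real.sqrt (∑ i ∈ Tᶜ, ‖x i‖^2) ≤ Real.sqrt d₁ := Real.sqrt_le_sqrt hcompl.le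
        _ = ε := by rw [hεdef]
    have hdist2 : dist xT x' ≤ ε := by
      have h1 : xT - x' = ((1 - σ⁻¹ : ℝ):ℂ) • xT := by
        rw [hx'def]
        push_cast
        rw [sub_smul, one_smul]
      rw [dist_eq_norm, h1, norm_smul, hxTnorm, Complex.norm_real, Real.norm_eq_abs]
      have hσinv : 1 ≤ σ⁻¹ := (one_le_inv₀ hσpos).mpr hσu
      have habs : |1 - σ⁻¹| = σ⁻¹ - 1 := by
        rw [abs_of_nonpos (by linarith)]
        ring
      rw [habs]
      have hmul : (σ⁻¹ - 1)*σ = 1 - σ := by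
        field_simp
      rw [hmul]
      nlinarith
    have hymem : y ∈ SigmaV := by
      rw [hSdef, Finset.mem_filter]
      constructor
      · apply Finset.mem_biUnion.mpr
        exact ⟨T, Finset.mem_powersetCard.mpr ⟨hTuniv, hTcard⟩,
          Finset.mem_image.mpr ⟨z, hzN, rfl⟩⟩
      · refine ⟨hynorm, ?_, ?_⟩
        · have hsub : (Function.support fun i => y i) ⊆ ↑T := by
            intro i hi
            by_contra h
            exact hi (hyzero i (fun hm => h (Finset.mem_coe.mpr hm)))
          calc (Function.support fun i => y i).ncard ≤ (↑T : Set (Fin n)).ncard :=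
                Set.ncard_le_ncard hsub T.finite_toSet
            _ = T.card := Set.ncard_coe_finset T
            _ = a := hTcard
        · have hsx' : ∑ i, ‖x' i‖^2 = 1 := by
            rw [EuclideanSpace.norm_eq] at hx'norm
            exact Real.sqrt_eq_one.mp hx'norm
          have hsy : ∑ i, ‖y i‖^2 = 1 := by
            rw [EuclideanSpace.norm_eq] at hynorm
            exact Real.sqrt_eq_one.mp hynorm
          have hf : ∀ i, 1/(a:ℝ) < ‖x i‖^2 → ‖x i‖^2 ≤ 1/b →
              ‖x i‖^2 ≤ ‖x' i‖^2 ∧ ‖x' i‖^2 ≤ (10/9) * (1/b) ∧ 1/(a:ℝ) < ‖x' i‖^2 := by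
            intro i h1 h2
            have hiT : i ∈ T := hT₀T (Finset.mem_filter.mpr ⟨Finset.mem_univ i, h1⟩)
            have hsq := hx'sq i hiT
            have hxle : ‖x i‖^2 ≤ ‖x i‖^2 / s1 := by
              rw [le_div_iff₀ hs1pos]
              nlinarith [sq_nonneg (‖x i‖)]
            refine ⟨by rw [hsq]; exact hxle, ?_, by rw [hsq]; exact lt_of_lt_of_le h1 hxle⟩
            rw [hsq, div_le_iff₀ hs1pos]
            have hb1 : (0:ℝ) ≤ 1/b := by positivity
            nlinarith [mul_nonneg hb1 (by linarith : (0:ℝ) ≤ s1 - 9/10)]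
          have hres := bucket_aux a b ε d₂ ha' hb hε x x' y hsx' hsy hdist3 hf hbig
          rw [hεdef] at hres
          exact hres
    refine ⟨y, hymem, ?_⟩
    calc dist x y ≤ dist x xT + dist xT x' + dist x' y := dist_triangle4 x xT x' y
      _ ≤ ε + ε + ε := by linarith
      _ ≤ 3 * Real.sqrt d₁ := by rw [← hεdef]; linarith
  · exact fun y hy => ((Finset.mem_filter.mp hy).2).2
end

section
/- Let a₁,…,a_n ≥ 0 with Σᵢ aᵢ = a > 0, fix δ ∈ (0,1) and n a positive integer with n^{δ−1} ≤ 1, and let b₁,…,b_n be independent random variables with bᵢ = aᵢ·δᵢ where the δᵢ are i.i.d. Bernoulli with P(δᵢ = 1) = n^{δ−1} and P(δᵢ = 0) = 1 − n^{δ−1}. Then for every t with 0 ≤ t ≤ 1, P[ Σᵢ bᵢ ≤ n^{δ−1}·t·a ] ≤ 1 − (1 − t)²·a/(a + (n^{1−δ} − 1)·maxᵢ aᵢ). -/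
open MeasureTheory ProbabilityTheory

noncomputable def bernoulliRV (p : ℝ) : Measure ℝ :=
  ENNReal.ofReal p • Measure.dirac (1 : ℝ) + ENNReal.ofReal (1 - p) • Measure.dirac (0 : ℝ)

lemma integrable_dirac'' {f : ℝ → ℝ} (hf : Measurable f) (x : ℝ) :
    Integrable f (Measure.dirac x) := by
  refine ⟨hf.aestronglyMeasurable, ?_⟩
  rw [HasFiniteIntegral, lintegral_dirac' _ (by measurability)]
  exact ENNReal.coe_lt_top

lemma bern_integral {p : ℝ} (hp0 : 0 ≤ p) (hp1 : p ≤ 1) {f : ℝ → ℝ} (hf : Measurable f) :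
    ∫ x, f x ∂(bernoulliRV p) = p * f 1 + (1 - p) * f 0 := by
  rw [bernoulliRV, integral_add_measure
      ((integrable_dirac'' hf 1).smul_measure ENNReal.ofReal_ne_top)
      ((integrable_dirac'' hf 0).smul_measure ENNReal.ofReal_ne_top),
    integral_smul_measure, integral_smul_measure, integral_dirac, integral_dirac,
    ENNReal.toReal_ofReal hp0, ENNReal.toReal_ofReal (by linarith : (0:ℝ) ≤ 1 - p)]
  simp [smul_eq_mul]

lemma bern_zero_one {p : ℝ} :
    bernoulliRV p {x : ℝ | ¬(x = 0 ∨ x = 1)} = 0 := by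
  have h1 : (1:ℝ) ∉ {x : ℝ | ¬(x = 0 ∨ x = 1)} := by simp
  have h0 : (0:ℝ) ∉ {x : ℝ | ¬(x = 0 ∨ x = 1)} := by simp
  simp [bernoulliRV, Measure.dirac_apply, Set.indicator_of_notMem h1,
    Set.indicator_of_notMem h0]

set_option maxHeartbeats 1600000 in
/-- Let `a₁, …, a_n ≥ 0` with `∑ aᵢ = a > 0`, fix `δ ∈ (0,1)` and a
positive integer `n` with `n^(δ−1) ≤ 1`, and let `bᵢ = aᵢ·δᵢ` with `δᵢ` i.i.d.
Bernoulli(`n^(δ−1)`). Then for `0 ≤ t ≤ 1`,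
`P[∑ bᵢ ≤ n^(δ−1) t a] ≤ 1 − (1 − t)²·a/(a + (n^(1−δ) − 1)·max aᵢ)`. -/
theorem stmt12 (δ : ℝ) (hδ : δ ∈ Set.Ioo (0 : ℝ) 1) (n : ℕ) (hn : 0 < n)
    (hp : (n : ℝ) ^ (δ - 1) ≤ 1)
    (a : Fin n → ℝ) (ha : ∀ i, 0 ≤ a i) (s : ℝ) (hs : s = ∑ i, a i) (hs0 : 0 < s)
    (Ω : Type) [MeasureSpace Ω] [IsProbabilityMeasure (ℙ : Measure Ω)]
    (dl : Fin n → Ω → ℝ) (hmeas : ∀ i, Measurable (dl i))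
    (hdist : ∀ i, Measure.map (dl i) ℙ = bernoulliRV ((n : ℝ) ^ (δ - 1)))
    (hindep : iIndepFun dl ℙ)
    (t : ℝ) (ht0 : 0 ≤ t) (ht1 : t ≤ 1) :
    ℙ {ω | (∑ i, a i * dl i ω) ≤ (n : ℝ) ^ (δ - 1) * t * s} ≤
      ENNReal.ofReal
        (1 - (1 - t) ^ 2 * s / (s + ((n : ℝ) ^ (1 - δ) - 1) * (⨆ i, a i))) := by
  set p : ℝ := (n : ℝ) ^ (δ - 1) with hpdef
  have hn0 : (0:ℝ) < n := Nat.cast_pos.mpr hn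
  have hp0 : 0 < p := Real.rpow_pos_of_pos hn0 _
  -- the random variables are a.e. {0,1}-valued
  have h01 : ∀ i, ∀ᵐ ω ∂(ℙ : Measure Ω), dl i ω = 0 ∨ dl i ω = 1 := by
    intro i
    have hset : MeasurableSet {x : ℝ | ¬(x = 0 ∨ x = 1)} := by
      simp only [not_or]
      exact (measurableSet_singleton 0).compl.inter (measurableSet_singleton 1).compl
    have hm := Measure.map_apply (μ := (ℙ : Measure Ω)) (hmeas i) hset
    rw [hdist i, bern_zero_one] at hm
    have : (ℙ : Measure Ω) {ω | ¬(dl i ω = 0 ∨ dl i ω = 1)} = 0 := hm.symm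
    exact (ae_iff).mpr this
  -- membership in Lᵖ
  have hmemTop : ∀ i, MemLp (dl i) ⊤ (ℙ : Measure Ω) := by
    intro i
    refine memLp_top_of_bound (hmeas i).aestronglyMeasurable 1 ?_
    filter_upwards [h01 i] with ω hω
    rcases hω with h | h <;> simp [h]
  have hIdl : ∀ i, Integrable (dl i) (ℙ : Measure Ω) := fun i =>
    memLp_one_iff_integrable.mp ((hmemTop i).mono_exponent le_top)
  -- first moments
  have hEdl : ∀ i, ∫ ω, dl i ω = p := by
    intro i
    have h := integral_map (μ := (ℙ : Measure Ω)) (φ := dl i) (f := fun x : ℝ => x)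
      (hmeas i).aemeasurable
      (by rw [hdist i]; exact measurable_id.aestronglyMeasurable)
    rw [hdist i, bern_integral (f := fun x : ℝ => x) hp0.le hp measurable_id] at h
    simpa using h.symm
  -- second moments of products
  have hint2 : ∀ i j, Integrable (fun ω => dl i ω * dl j ω) (ℙ : Measure Ω) := by
    intro i j
    refine Integrable.mono' (integrable_const 1)
      ((hmeas i).mul (hmeas j)).aestronglyMeasurable ?_
    filter_upwards [h01 i, h01 j] with ω h1 h2
    rcases h1 with h1 | h1 <;> rcases h2 with h2 | h2 <;> simp [h1, h2]
  have hEprod : ∀ i j, i ≠ j → ∫ ω, dl i ω * dl j ω = p^2 := by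
    intro i j hij
    have h := (hindep.indepFun hij).integral_fun_mul_eq_mul_integral
      (hmeas i).aestronglyMeasurable (hmeas j).aestronglyMeasurable
    calc ∫ ω, dl i ω * dl j ω = (∫ ω, dl i ω) * ∫ ω, dl j ω := h
    _ = p ^ 2 := by rw [hEdl i, hEdl j, sq]
  have hEsq : ∀ i, ∫ ω, dl i ω * dl i ω = p := by
    intro i
    have h := integral_map (μ := (ℙ : Measure Ω)) (φ := dl i) (f := fun x : ℝ => x * x)
      (hmeas i).aemeasurable
      (by rw [hdist i]; exact (measurable_id.mul measurable_id).aestronglyMeasurable)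
    rw [hdist i, bern_integral (f := fun x : ℝ => x * x) hp0.le hp (measurable_id.mul measurable_id)] at h
    simpa using h.symm
  -- the sum X
  set X : Ω → ℝ := fun ω => ∑ i, a i * dl i ω with hXdef
  have hXmeas : Measurable X := by
    apply Finset.measurable_sum
    exact fun i _ => (hmeas i).const_mul _
  have hXint : Integrable X (ℙ : Measure Ω) :=
    integrable_finset_sum _ fun i _ => (hIdl i).const_mul _
  have hXnonneg : 0 ≤ᵐ[(ℙ : Measure Ω)] X := by
    have := ae_all_iff.mpr h01
    filter_upwards [this] with ω hω
    apply Finset.sum_nonneg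
    intro i _
    rcases hω i with h | h <;> simp [h] <;> exact ha i
  have hEX : ∫ ω, X ω = p * s := by
    rw [hXdef]
    rw [integral_finset_sum _ fun i _ => (hIdl i).const_mul _]
    simp_rw [integral_const_mul, hEdl]
    rw [hs, Finset.mul_sum]
    exact Finset.sum_congr rfl fun i _ => by ring
  -- second moment
  set Q : ℝ := ∑ i, (a i)^2 with hQdef
  have hEX2 : ∫ ω, X ω ^ 2 = p^2 * s^2 + p * (1-p) * Q := by
    have hre : ∀ ω, X ω ^ 2 = ∑ i, ∑ j, a i * a j * (dl i ω * dl j ω) := by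
      intro ω
      rw [hXdef, sq, Finset.sum_mul_sum]
      exact Finset.sum_congr rfl fun i _ => Finset.sum_congr rfl fun j _ => by ring
    simp_rw [hre]
    rw [integral_finset_sum _ fun i _ => integrable_finset_sum _
        fun j _ => (hint2 i j).const_mul _]
    have : ∀ i, ∫ ω, ∑ j, a i * a j * (dl i ω * dl j ω)
        = ∑ j, a i * a j * (if i = j then p else p^2) := by
      intro i
      rw [integral_finset_sum _ fun j _ => (hint2 i j).const_mul _]
      refine Finset.sum_congr rfl fun j _ => ?_
      rw [integral_const_mul]
      by_cases hij : i = j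
      · subst hij; rw [hEsq i, if_pos rfl]
      · rw [hEprod i j hij, if_neg hij]
    simp_rw [this]
    have hsplit : ∀ i j : Fin n, a i * a j * (if i = j then p else p^2)
        = a i * a j * p^2 + (if i = j then a i * a j * (p - p^2) else 0) := by
      intro i j; split <;> ring
    simp_rw [hsplit, Finset.sum_add_distrib]
    have h1 : ∑ i : Fin n, ∑ j : Fin n, a i * a j * p^2 = p^2 * s^2 := by
      simp_rw [← Finset.sum_mul]
      rw [← Finset.sum_mul_sum, ← hs]; ring
    have h2 : ∑ i : Fin n, ∑ j : Fin n, (if i = j then a i * a j * (p - p^2) else 0)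
        = p * (1-p) * Q := by
      have : ∀ i : Fin n, ∑ j : Fin n, (if i = j then a i * a j * (p - p^2) else 0)
          = a i * a i * (p - p^2) := by
        intro i
        rw [Finset.sum_ite_eq]
        simp
      simp_rw [this]
      rw [Finset.sum_congr rfl
        (fun i _ => (by ring : a i * a i * (p - p^2) = p*(1-p) * (a i)^2)),
        ← Finset.mul_sum, hQdef]
    rw [h1, h2]
  set m2 : ℝ := p^2 * s^2 + p * (1-p) * Q with hm2def
  have hQ0 : 0 ≤ Q := Finset.sum_nonneg fun i _ => sq_nonneg _
  have hm2pos : 0 < m2 := by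
    have : 0 < p^2 * s^2 := by positivity
    have h2 : 0 ≤ p * (1-p) * Q := by
      apply mul_nonneg (mul_nonneg hp0.le (by linarith)) hQ0
    linarith
  -- the event
  set A : Set Ω := {ω | X ω ≤ p * t * s} with hAdef
  have hA : MeasurableSet A := measurableSet_le hXmeas measurable_const
  have hc0 : (0:ℝ) ≤ p * t * s := by positivity
  have hPA1 : (ℙ : Measure Ω) A ≤ 1 := prob_le_one
  -- integral over A is at most the threshold
  have hintA : ∫ ω in A, X ω ≤ p * t * s := by
    have h1 : ∫ ω in A, X ω ≤ ∫ ω in A, (p * t * s : ℝ) := by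
      refine setIntegral_mono_on hXint.integrableOn
        ((integrableOn_const_iff).mpr (Or.inr (measure_lt_top _ _))) hA ?_
      intro ω hω; exact hω
    have h2 : ∫ ω in A, (p * t * s : ℝ) = ((ℙ : Measure Ω) A).toReal * (p * t * s) := by
      rw [setIntegral_const, smul_eq_mul]; rfl
    have h3 : ((ℙ : Measure Ω) A).toReal ≤ 1 := by
      rw [← ENNReal.toReal_one]
      exact ENNReal.toReal_mono ENNReal.one_ne_top hPA1
    calc ∫ ω in A, X ω ≤ ((ℙ : Measure Ω) A).toReal * (p * t * s) := h2 ▸ h1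
      _ ≤ 1 * (p * t * s) := by
          exact mul_le_mul_of_nonneg_right h3 hc0
      _ = p * t * s := one_mul _
  -- Cauchy-Schwarz on the complement
  set q : ℝ := ((ℙ : Measure Ω) Aᶜ).toReal with hqdef
  have hq0 : 0 ≤ q := ENNReal.toReal_nonneg
  have hrpow2 : ∀ x : ℝ, x ^ (2:ℝ) = x ^ 2 := fun x => by
    rw [show (2:ℝ) = ((2:ℕ):ℝ) by norm_num, Real.rpow_natCast]
  set g : Ω → ℝ := (Aᶜ).indicator (fun _ => (1:ℝ)) with hgdef
  have hg01 : ∀ ω, g ω = 0 ∨ g ω = 1 := by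
    intro ω
    by_cases hω : ω ∈ Aᶜ
    · right; simp [hgdef, Set.indicator_of_mem hω]
    · left; simp [hgdef, Set.indicator_of_notMem hω]
  have hgmeas : Measurable g := measurable_const.indicator hA.compl
  have hgnonneg : 0 ≤ᵐ[(ℙ : Measure Ω)] g := by
    filter_upwards with ω
    rcases hg01 ω with h | h <;> simp [h]
  have hXmem2 : MemLp X (ENNReal.ofReal 2) (ℙ : Measure Ω) :=
    memLp_finset_sum _ fun i _ =>
      (((hmemTop i).mono_exponent le_top).const_mul _)
  have hgmem2 : MemLp g (ENNReal.ofReal 2) (ℙ : Measure Ω) := by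
    refine MemLp.mono_exponent ?_ le_top
    refine memLp_top_of_bound hgmeas.aestronglyMeasurable 1 ?_
    filter_upwards with ω
    rcases hg01 ω with h | h <;> simp [h]
  have hpq : Real.HolderConjugate 2 2 := Real.HolderConjugate.two_two
  have hCS0 := integral_mul_le_Lp_mul_Lq_of_nonneg hpq hXnonneg hgnonneg hXmem2 hgmem2
  have hXg : ∀ ω, X ω * g ω = (Aᶜ).indicator X ω := by
    intro ω
    by_cases hω : ω ∈ Aᶜ
    · simp [hgdef, Set.indicator_of_mem hω]
    · simp [hgdef, Set.indicator_of_notMem hω]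
  have hCS : ∫ ω in Aᶜ, X ω ≤ m2 ^ ((1:ℝ)/2) * q ^ ((1:ℝ)/2) := by
    have e1 : ∫ ω, X ω * g ω = ∫ ω in Aᶜ, X ω := by
      simp_rw [hXg]
      exact integral_indicator hA.compl
    have e2 : ∫ ω, X ω ^ (2:ℝ) = m2 := by
      simp_rw [hrpow2]; rw [hEX2]
    have e3 : ∫ ω, g ω ^ (2:ℝ) = q := by
      simp_rw [hrpow2]
      have : ∀ ω, g ω ^ 2 = g ω := by
        intro ω; rcases hg01 ω with h | h <;> simp [h]
      simp_rw [this, hgdef]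
      rw [integral_indicator_const _ hA.compl, smul_eq_mul, mul_one, hqdef]; rfl
    rw [e1, e2, e3] at hCS0
    exact hCS0
  -- Paley-Zygmund inequality
  have hEXsplit : (∫ ω in A, X ω) + ∫ ω in Aᶜ, X ω = p * s := by
    rw [integral_add_compl hA hXint, hEX]
  have hkey1 : (1 - t) * (p * s) ≤ m2 ^ ((1:ℝ)/2) * q ^ ((1:ℝ)/2) := by nlinarith
  have hhalf : ∀ x : ℝ, 0 ≤ x → (x ^ ((1:ℝ)/2)) ^ 2 = x := by
    intro x hx
    rw [← Real.rpow_natCast (x ^ ((1:ℝ)/2)) 2, ← Real.rpow_mul hx]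
    norm_num
  have hsq : ((1 - t) * (p * s)) ^ 2 ≤ m2 * q := by
    have hL : 0 ≤ (1 - t) * (p * s) := by
      apply mul_nonneg (by linarith) (by positivity)
    have h := pow_le_pow_left₀ hL hkey1 2
    have h2 : (m2 ^ ((1:ℝ)/2) * q ^ ((1:ℝ)/2)) ^ 2 = m2 * q := by
      rw [mul_pow, hhalf m2 hm2pos.le, hhalf q hq0]
    rw [← h2]; exact h
  have hqlower : (1 - t)^2 * ((p * s)^2 / m2) ≤ q := by
    rw [← mul_div_assoc, div_le_iff₀ hm2pos]
    calc (1-t)^2 * (p*s)^2 = ((1-t) * (p*s))^2 := by ring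
      _ ≤ m2 * q := hsq
      _ = q * m2 := by ring
  -- algebra: comparing with the stated bound
  set M : ℝ := ⨆ i, a i with hMdef
  have hMub : ∀ i, a i ≤ M := fun i => le_ciSup (Set.finite_range a).bddAbove i
  have hM0 : 0 ≤ M := by
    obtain ⟨i⟩ : Nonempty (Fin n) := ⟨⟨0, hn⟩⟩
    exact le_trans (ha i) (hMub i)
  have hQle : Q ≤ s * M := by
    rw [hQdef, hs, Finset.sum_mul]
    refine Finset.sum_le_sum fun i _ => ?_
    rw [sq]
    exact mul_le_mul_of_nonneg_left (hMub i) (ha i)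
  set D : ℝ := s + (p⁻¹ - 1) * M with hDdef
  have hpinv1 : 1 ≤ p⁻¹ := by
    nlinarith [mul_inv_cancel₀ hp0.ne', inv_pos.mpr hp0]
  have hD0 : 0 < D := by
    have : 0 ≤ (p⁻¹ - 1) * M := mul_nonneg (by linarith) hM0
    rw [hDdef]; linarith
  have hfrac : s / D ≤ (p * s)^2 / m2 := by
    rw [div_le_div_iff₀ hD0 hm2pos]
    have hexp : (p*s)^2 * D = p^2*s^3 + p*(1-p)*(s^2*M) := by
      rw [hDdef]; field_simp
    have hsm : s * m2 = p^2*s^3 + p*(1-p)*(s*Q) := by rw [hm2def]; ring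
    rw [hexp, hsm]
    have h1 : p*(1-p)*(s*Q) ≤ p*(1-p)*(s^2*M) := by
      apply mul_le_mul_of_nonneg_left _ (mul_nonneg hp0.le (by linarith))
      calc s * Q ≤ s * (s * M) := mul_le_mul_of_nonneg_left hQle hs0.le
        _ = s^2 * M := by ring
    linarith
  have hfinal : (1 - t)^2 * s / D ≤ q := by
    calc (1 - t)^2 * s / D = (1-t)^2 * (s / D) := by rw [mul_div_assoc]
      _ ≤ (1-t)^2 * ((p * s)^2 / m2) := by
          apply mul_le_mul_of_nonneg_left hfrac (sq_nonneg _)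
      _ ≤ q := hqlower
  -- conclude
  have hninv : (n : ℝ) ^ (1 - δ) = p⁻¹ := by
    rw [show (1 - δ) = -(δ - 1) by ring, Real.rpow_neg hn0.le, hpdef]
  rw [hninv]
  have hPAtoReal : ((ℙ : Measure Ω) A).toReal = 1 - q := by
    have hcompl : (ℙ : Measure Ω) Aᶜ = 1 - (ℙ : Measure Ω) A :=
      prob_compl_eq_one_sub hA
    rw [hqdef, hcompl, ENNReal.toReal_sub_of_le hPA1 ENNReal.one_ne_top,
      ENNReal.toReal_one]
    ring
  rw [← ENNReal.ofReal_toReal (measure_ne_top ℙ A)]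
  apply ENNReal.ofReal_le_ofReal
  rw [hPAtoReal]
  have : (1 - t)^2 * s / (s + (p⁻¹ - 1) * M) ≤ q := hfinal
  linarith
end
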